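/- arXiv:1407.5713 — 2 statements merged into one kernel-verified Lean document; each statement's English description precedes it below -/
import Mathlib

section
/- Let K = ℚ(√(-n)) with n a square-free positive integer, -n ≡ 2 or 3 mod 4, θ = √(-n), and N ≥ 2 an integer. For any integer s with s not divisible by N, the quotient g_{(0, s/N)}(θ) / g_{(0, 1/N)}(θ) of Siegel function values is a real number. -/
open Complex

/-- The Siegel function. -/
noncomputable def siegel (τ : ℂ) (r₁ r₂ : ℝ) : ℂ :=
  -Complex.exp (Real.pi * Complex.I * τ * ((r₁ : ℂ) ^ 2 - (r₁ : ℂ) + 1 / 6)) *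
    Complex.exp (Real.pi * Complex.I * (r₂ : ℂ) * ((r₁ : ℂ) - 1)) *
    (1 - Complex.exp (2 * Real.pi * Complex.I * ((r₁ : ℂ) * τ + (r₂ : ℂ)))) *
    ∏' n : ℕ,
      ((1 - Complex.exp (2 * Real.pi * Complex.I * τ) ^ (n + 1) *
          Complex.exp (2 * Real.pi * Complex.I * ((r₁ : ℂ) * τ + (r₂ : ℂ)))) *
        (1 - Complex.exp (2 * Real.pi * Complex.I * τ) ^ (n + 1) *
          (Complex.exp (2 * Real.pi * Complex.I * ((r₁ : ℂ) * τ + (r₂ : ℂ))))⁻¹))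


private lemma conj_tprod' (f : ℕ → ℂ) :
    (starRingEnd ℂ) (∏' i, f i) = ∏' i, (starRingEnd ℂ) (f i) := by
  by_cases h : Multipliable f
  · exact h.map_tprod (starRingEnd ℂ) continuous_conj
  · have h2 : ¬ Multipliable fun i => (starRingEnd ℂ) (f i) := by
      intro h2
      apply h
      have := h2.map (starRingEnd ℂ) continuous_conj
      simpa [Function.comp_def, Complex.conj_conj] using this
    rw [tprod_eq_one_of_not_multipliable h, tprod_eq_one_of_not_multipliable h2, map_one]

private lemma conj_siegel (x r : ℝ) :
    (starRingEnd ℂ) (siegel (Complex.I * (x : ℂ)) 0 r) =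
      - siegel (Complex.I * (x : ℂ)) 0 r := by
  set τ : ℂ := Complex.I * (x : ℂ) with hτdef
  have hq : (starRingEnd ℂ) (Complex.exp (2 * Real.pi * Complex.I * τ)) =
      Complex.exp (2 * Real.pi * Complex.I * τ) := by
    rw [← Complex.exp_conj]
    congr 1
    simp only [hτdef, map_mul, map_div₀, map_one, map_sub, map_add, map_ofNat, map_pow, map_zero, Complex.ofReal_zero, Complex.conj_I, Complex.conj_ofReal]
    ring
  have hA : (starRingEnd ℂ)
      (Complex.exp (Real.pi * Complex.I * τ * (((0:ℝ) : ℂ) ^ 2 - ((0:ℝ):ℂ) + 1 / 6))) =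
      Complex.exp (Real.pi * Complex.I * τ * (((0:ℝ) : ℂ) ^ 2 - ((0:ℝ):ℂ) + 1 / 6)) := by
    rw [← Complex.exp_conj]
    congr 1
    simp only [hτdef, map_mul, map_div₀, map_one, map_sub, map_add, map_ofNat, map_pow, map_zero, Complex.ofReal_zero, Complex.conj_I, Complex.conj_ofReal]
    ring
  have hu : (starRingEnd ℂ) (Complex.exp (2 * Real.pi * Complex.I * (((0:ℝ):ℂ) * τ + (r:ℂ)))) =
      (Complex.exp (2 * Real.pi * Complex.I * (((0:ℝ):ℂ) * τ + (r:ℂ))))⁻¹ := by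
    rw [← Complex.exp_conj, ← Complex.exp_neg]
    congr 1
    simp only [hτdef, map_mul, map_div₀, map_one, map_sub, map_add, map_ofNat, map_pow, map_zero, Complex.ofReal_zero, Complex.conj_I, Complex.conj_ofReal]
    ring
  have hBC : (starRingEnd ℂ)
      (Complex.exp (Real.pi * Complex.I * (r:ℂ) * (((0:ℝ):ℂ) - 1)) *
        (1 - Complex.exp (2 * Real.pi * Complex.I * (((0:ℝ):ℂ) * τ + (r:ℂ))))) =
      - (Complex.exp (Real.pi * Complex.I * (r:ℂ) * (((0:ℝ):ℂ) - 1)) *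
        (1 - Complex.exp (2 * Real.pi * Complex.I * (((0:ℝ):ℂ) * τ + (r:ℂ))))) := by
    have e1 : Complex.exp (Real.pi * Complex.I * (r:ℂ) * (((0:ℝ):ℂ) - 1)) *
        Complex.exp (2 * Real.pi * Complex.I * (((0:ℝ):ℂ) * τ + (r:ℂ))) =
        Complex.exp (Real.pi * Complex.I * (r:ℂ)) := by
      rw [← Complex.exp_add]; congr 1; push_cast; ring
    have e2 : Complex.exp (Real.pi * Complex.I * (r:ℂ)) *
        (Complex.exp (2 * Real.pi * Complex.I * (((0:ℝ):ℂ) * τ + (r:ℂ))))⁻¹ =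
        Complex.exp (Real.pi * Complex.I * (r:ℂ) * (((0:ℝ):ℂ) - 1)) := by
      rw [← Complex.exp_neg, ← Complex.exp_add]; congr 1; push_cast; ring
    have hB : (starRingEnd ℂ) (Complex.exp (Real.pi * Complex.I * (r:ℂ) * (((0:ℝ):ℂ) - 1))) =
        Complex.exp (Real.pi * Complex.I * (r:ℂ)) := by
      rw [← Complex.exp_conj]
      congr 1
      simp only [hτdef, map_mul, map_div₀, map_one, map_sub, map_add, map_ofNat, map_pow, map_zero, Complex.ofReal_zero, Complex.conj_I, Complex.conj_ofReal]
      ring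
    rw [map_mul, map_sub, map_one, hB, hu, mul_sub, mul_sub, e2, mul_one, mul_one,
      neg_sub, e1]
  -- term-wise conjugation of the product
  unfold siegel
  rw [map_mul, map_mul, map_mul, map_neg, hA, conj_tprod']
  have hterm : ∀ m : ℕ, (starRingEnd ℂ)
      ((1 - Complex.exp (2 * Real.pi * Complex.I * τ) ^ (m + 1) *
          Complex.exp (2 * Real.pi * Complex.I * (((0:ℝ):ℂ) * τ + (r:ℂ)))) *
        (1 - Complex.exp (2 * Real.pi * Complex.I * τ) ^ (m + 1) *
          (Complex.exp (2 * Real.pi * Complex.I * (((0:ℝ):ℂ) * τ + (r:ℂ))))⁻¹)) =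
      ((1 - Complex.exp (2 * Real.pi * Complex.I * τ) ^ (m + 1) *
          Complex.exp (2 * Real.pi * Complex.I * (((0:ℝ):ℂ) * τ + (r:ℂ)))) *
        (1 - Complex.exp (2 * Real.pi * Complex.I * τ) ^ (m + 1) *
          (Complex.exp (2 * Real.pi * Complex.I * (((0:ℝ):ℂ) * τ + (r:ℂ))))⁻¹)) := by
    intro m
    rw [map_mul, map_sub, map_sub, map_one, map_mul, map_mul, map_pow, hq, map_inv₀, hu,
      inv_inv]
    ring
  simp only [hterm]
  have := hBC
  rw [map_mul] at this
  calc -(Complex.exp (Real.pi * Complex.I * τ * (((0:ℝ):ℂ) ^ 2 - ((0:ℝ):ℂ) + 1 / 6))) *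
      (starRingEnd ℂ) (Complex.exp (Real.pi * Complex.I * (r:ℂ) * (((0:ℝ):ℂ) - 1))) *
      (starRingEnd ℂ) (1 - Complex.exp (2 * Real.pi * Complex.I * (((0:ℝ):ℂ) * τ + (r:ℂ)))) *
      ∏' (m : ℕ), ((1 - Complex.exp (2 * Real.pi * Complex.I * τ) ^ (m + 1) *
          Complex.exp (2 * Real.pi * Complex.I * (((0:ℝ):ℂ) * τ + (r:ℂ)))) *
        (1 - Complex.exp (2 * Real.pi * Complex.I * τ) ^ (m + 1) *
          (Complex.exp (2 * Real.pi * Complex.I * (((0:ℝ):ℂ) * τ + (r:ℂ))))⁻¹))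
      = -(Complex.exp (Real.pi * Complex.I * τ * (((0:ℝ):ℂ) ^ 2 - ((0:ℝ):ℂ) + 1 / 6))) *
        (-(Complex.exp (Real.pi * Complex.I * (r:ℂ) * (((0:ℝ):ℂ) - 1)) *
          (1 - Complex.exp (2 * Real.pi * Complex.I * (((0:ℝ):ℂ) * τ + (r:ℂ)))))) *
        ∏' (m : ℕ), ((1 - Complex.exp (2 * Real.pi * Complex.I * τ) ^ (m + 1) *
          Complex.exp (2 * Real.pi * Complex.I * (((0:ℝ):ℂ) * τ + (r:ℂ)))) *
        (1 - Complex.exp (2 * Real.pi * Complex.I * τ) ^ (m + 1) *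
          (Complex.exp (2 * Real.pi * Complex.I * (((0:ℝ):ℂ) * τ + (r:ℂ))))⁻¹)) := by
          rw [mul_assoc _ ((starRingEnd ℂ) _) ((starRingEnd ℂ) _), ← map_mul, hBC]
    _ = _ := by ring

/-- For `K = ℚ(√-n)` with `n` squarefree, `-n ≡ 2, 3 (mod 4)`, `θ = √-n = i√n`,
`N ≥ 2` and `s` not divisible by `N`, the quotient
`g_{(0, s/N)}(θ) / g_{(0, 1/N)}(θ)` is a real number. -/
theorem stmt_4 (n : ℕ) (hn : 0 < n) (hsq : Squarefree n)
    (hmod : n % 4 = 1 ∨ n % 4 = 2) (N : ℕ) (hN : 2 ≤ N)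
    (s : ℤ) (hs : ¬ (N : ℤ) ∣ s) :
    (siegel (Complex.I * (Real.sqrt n : ℂ)) 0 ((s : ℝ) / N) /
      siegel (Complex.I * (Real.sqrt n : ℂ)) 0 (1 / N)).im = 0 := by
  apply Complex.conj_eq_iff_im.mp
  rw [map_div₀, conj_siegel, conj_siegel, neg_div_neg_eq]
end

section
/- Let N ≥ 2 be an integer, K an imaginary quadratic field with ring of integers O_K, p an odd prime with p² dividing N·d_K where d_K is the discriminant, and set β = 1 + (2N/p)√d (if p = 3) or β = 1 + (6N/p)√d (if p ≠ 3), where K = ℚ(√d), d < 0 squarefree (interpreting √d = √(-|d|)). Then β + NO_K has multiplicative order exactly p in (O_K/NO_K)^×. -/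
open NumberField
open Module


lemma aux_pow_one_add {R : Type*} [CommRing R] {x : R} (hx : x * x = 0) (n : ℕ) :
    (1 + x) ^ n = 1 + (n : R) * x := by
  induction n with
  | zero => simp
  | succ k ih =>
    rw [pow_succ, ih, Nat.cast_succ]
    linear_combination (k : R) * hx

lemma aux_trace_theta {K : Type*} [Field K] [NumberField K] (h2 : finrank ℚ K = 2)
    {m : ℕ} (hm : 0 < m) (ϑ : K) (hϑ : ϑ ^ 2 = -(m : K)) :
    Algebra.trace ℚ K ϑ = 0 := by
  classical
  have hind : LinearIndependent ℚ ![(1 : K), ϑ] := by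
    rw [LinearIndependent.pair_iff]
    intro s t hst
    by_cases ht : t = 0
    · subst ht
      simp only [zero_smul, add_zero, smul_eq_mul, mul_one] at hst
      refine ⟨by simpa using hst, rfl⟩
    · exfalso
      have h1 : ϑ = ((-s / t) : ℚ) • (1 : K) := by
        have h0 : t • ϑ = (-s) • (1 : K) := by
          rw [neg_smul]
          exact (neg_eq_of_add_eq_zero_right (by linear_combination hst)).symm
        have := congrArg (fun z => (t⁻¹ : ℚ) • z) h0
        simp only [smul_smul, inv_mul_cancel₀ ht, one_smul] at this
        rw [this]
        congr 1
        field_simp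
      have h3 : ϑ = algebraMap ℚ K (-s / t) := by
        rw [h1, Algebra.smul_def, mul_one]
      have h4 : algebraMap ℚ K ((-s / t) ^ 2) = algebraMap ℚ K (-(m : ℚ)) := by
        rw [map_pow, ← h3, hϑ]
        push_cast
        simp
      have h5 : ((-s / t) : ℚ) ^ 2 = -(m : ℚ) := (algebraMap ℚ K).injective h4
      have hmq : (0 : ℚ) < m := by exact_mod_cast hm
      nlinarith [sq_nonneg ((-s / t) : ℚ)]
  have hcard : Fintype.card (Fin 2) = finrank ℚ K := by simp [h2]
  let b : Basis (Fin 2) ℚ K := basisOfLinearIndependentOfCardEqFinrank hind hcard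
  have hb : ⇑b = ![(1 : K), ϑ] := coe_basisOfLinearIndependentOfCardEqFinrank _ _
  rw [Algebra.trace_eq_matrix_trace b, Matrix.trace_fin_two]
  have hb0 : b 0 = 1 := by rw [hb]; rfl
  have hb1 : b 1 = ϑ := by rw [hb]; rfl
  have h00 : Algebra.leftMulMatrix b ϑ 0 0 = 0 := by
    rw [Algebra.leftMulMatrix_eq_repr_mul, hb0, mul_one, ← hb1, b.repr_self_apply]
    simp
  have h11 : Algebra.leftMulMatrix b ϑ 1 1 = 0 := by
    rw [Algebra.leftMulMatrix_eq_repr_mul, hb1, ← sq, hϑ]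
    have : -((m : ℚ) • (1 : K)) = (-(m : ℚ)) • b 0 := by rw [hb0, neg_smul]
    have hK : -((m : K)) = (-(m : ℚ)) • b 0 := by
      rw [← this, Algebra.smul_def, mul_one]
      push_cast
      simp
    rw [hK, map_smul]
    simp [b.repr_self_apply]
  rw [h00, h11, add_zero]

lemma aux_discr_dvd (m : ℕ) (hm : 0 < m) (K : Type*) [Field K] [NumberField K]
    (h2 : finrank ℚ K = 2) (θ : 𝓞 K) (hθ2 : θ ^ 2 = -(m : 𝓞 K)) :
    NumberField.discr K ∣ 4 * (m : ℤ) := by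
  classical
  set v : Fin 2 → 𝓞 K := ![1, θ] with hv
  set ϑ : K := algebraMap (𝓞 K) K θ with hϑdef
  have hϑ : ϑ ^ 2 = -(m : K) := by
    rw [hϑdef, ← map_pow, hθ2]
    push_cast
    simp
  -- index equivalence for the integral basis
  have hcard : Fintype.card (Free.ChooseBasisIndex ℤ (𝓞 K)) = 2 := by
    rw [← finrank_eq_card_chooseBasisIndex, RingOfIntegers.rank, h2]
  let e : Free.ChooseBasisIndex ℤ (𝓞 K) ≃ Fin 2 := Fintype.equivFinOfCardEq hcard
  let bZ : Basis (Fin 2) ℤ (𝓞 K) := (RingOfIntegers.basis K).reindex e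
  let M : Matrix (Fin 2) (Fin 2) ℤ := Matrix.of fun j i => bZ.repr (v i) j
  have hvm : v = Matrix.vecMul (⇑bZ) (M.map (algebraMap ℤ (𝓞 K))) := by
    funext i
    simp only [Matrix.vecMul, dotProduct, Matrix.map_apply, Matrix.of_apply, M]
    simp_rw [mul_comm, ← Algebra.smul_def]
    exact (bZ.sum_repr (v i)).symm
  have key : Algebra.discr ℤ v = M.det ^ 2 * NumberField.discr K := by
    rw [hvm, Algebra.discr_of_matrix_vecMul, NumberField.discr_eq_discr K bZ]
  -- compute the discriminant of v
  have htr : ∀ a : 𝓞 K, (algebraMap ℤ ℚ) (Algebra.trace ℤ (𝓞 K) a)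
      = Algebra.trace ℚ K (algebraMap (𝓞 K) K a) :=
    fun a => (Algebra.trace_localization ℤ (nonZeroDivisors ℤ) a).symm
  have t1 : Algebra.trace ℚ K (1 : K) = 2 := by
    rw [← map_one (algebraMap ℚ K), Algebra.trace_algebraMap, h2]
    norm_num
  have tθ : Algebra.trace ℚ K ϑ = 0 := aux_trace_theta h2 hm ϑ hϑ
  have tθ2 : Algebra.trace ℚ K (ϑ * ϑ) = -(4 * (m : ℚ)) / 2 := by
    rw [← sq, hϑ]
    have : -((m : K)) = algebraMap ℚ K (-(m : ℚ)) := by push_cast; simp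
    rw [this, Algebra.trace_algebraMap, h2]
    push_cast
    ring
  have hdq : algebraMap ℤ ℚ (Algebra.discr ℤ v) = -(4 * (m : ℚ)) := by
    rw [Algebra.discr_def, Matrix.det_fin_two]
    simp only [Algebra.traceMatrix_apply, Algebra.traceForm_apply]
    rw [map_sub, map_mul (algebraMap ℤ ℚ), map_mul (algebraMap ℤ ℚ), htr, htr, htr, htr]
    have hv0 : v 0 = 1 := rfl
    have hv1 : v 1 = θ := rfl
    rw [hv0, hv1, map_mul (algebraMap (𝓞 K) K), map_mul (algebraMap (𝓞 K) K),
      mul_one, _root_.map_one (algebraMap (𝓞 K) K), ← hϑdef]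
    simp only [one_mul, mul_one]
    rw [t1, tθ, tθ2]
    ring
  have hdint : Algebra.discr ℤ v = -(4 * (m : ℤ)) := by
    have : ((Algebra.discr ℤ v : ℤ) : ℚ) = ((-(4 * (m : ℤ)) : ℤ) : ℚ) := by
      rw [show ((Algebra.discr ℤ v : ℤ) : ℚ) = algebraMap ℤ ℚ (Algebra.discr ℤ v) from rfl, hdq]
      push_cast
      ring
    exact_mod_cast this
  have : NumberField.discr K ∣ -(4 * (m : ℤ)) := by
    rw [← hdint, key]
    exact Dvd.intro_left _ rfl
  exact (dvd_neg).mp this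

set_option synthInstance.maxHeartbeats 1000000 in
set_option maxHeartbeats 1000000 in
lemma aux_main (m : ℕ) (hm : 0 < m) (hsq : Squarefree m)
    (K : Type*) [Field K] [NumberField K] (h2 : Module.finrank ℚ K = 2)
    (θ : 𝓞 K) (hθ2 : θ ^ 2 = -(m : 𝓞 K))
    (N : ℕ) (hN : 2 ≤ N) (p : ℕ) (hp : p.Prime) (hpN : p ∣ N)
    (k : ℕ) (hk : k = 2 ∨ k = 6) (hpk : ¬ p ∣ k)
    (hdvd4 : (p : ℤ) ^ 2 ∣ 4 * N * m)
    (β : 𝓞 K) (hβ : β = 1 + ((k * N / p : ℕ) : 𝓞 K) * θ) :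
    orderOf (Ideal.Quotient.mk (Ideal.span {(N : 𝓞 K)}) β) = p := by
  classical
  haveI : Fact p.Prime := ⟨hp⟩
  set c : ℕ := k * N / p with hc
  have hcp : c * p = k * N := Nat.div_mul_cancel (hpN.mul_left k)
  -- N divides c^2 * m
  obtain ⟨t, ht⟩ := hdvd4
  have hj : ∃ j : ℤ, (k : ℤ) ^ 2 = 4 * j := by
    rcases hk with h | h <;> subst h
    · exact ⟨1, by norm_num⟩
    · exact ⟨9, by norm_num⟩
  obtain ⟨j, hjk⟩ := hj
  have hcpz : (c : ℤ) * p = (k : ℤ) * N := by exact_mod_cast hcp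
  have hp2ne : ((p : ℤ) ^ 2) ≠ 0 := by
    have : (p : ℤ) ≠ 0 := by exact_mod_cast hp.ne_zero
    positivity
  have hNdvd : (c : ℤ) ^ 2 * m = (N : ℤ) * (j * t) := by
    have h1 : ((c : ℤ) ^ 2 * m) * (p : ℤ) ^ 2 = ((N : ℤ) * (j * t)) * (p : ℤ) ^ 2 := by
      have : ((c : ℤ) * p) ^ 2 * m = ((k : ℤ) * N) ^ 2 * m := by rw [hcpz]
      calc ((c : ℤ) ^ 2 * m) * (p : ℤ) ^ 2 = ((c : ℤ) * p) ^ 2 * m := by ring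
        _ = ((k : ℤ) * N) ^ 2 * m := by rw [hcpz]
        _ = j * (N : ℤ) * (4 * N * m) := by rw [mul_pow, hjk]; ring
        _ = j * (N : ℤ) * ((p : ℤ) ^ 2 * t) := by rw [ht]
        _ = ((N : ℤ) * (j * t)) * (p : ℤ) ^ 2 := by ring
    exact mul_right_cancel₀ hp2ne h1
  have hNc2m : (N : ℕ) ∣ c ^ 2 * m := by
    have : (N : ℤ) ∣ ((c ^ 2 * m : ℕ) : ℤ) := ⟨j * t, by push_cast; exact hNdvd⟩
    exact_mod_cast this
  set I : Ideal (𝓞 K) := Ideal.span {(N : 𝓞 K)} with hI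
  set φ := Ideal.Quotient.mk I with hφ
  set x : 𝓞 K ⧸ I := φ ((c : 𝓞 K) * θ) with hx
  have hmem : ∀ a : 𝓞 K, φ a = 0 ↔ (N : 𝓞 K) ∣ a := by
    intro a
    rw [hφ, Ideal.Quotient.eq_zero_iff_mem, hI, Ideal.mem_span_singleton]
  have hx2 : x * x = 0 := by
    rw [hx, ← map_mul, hmem]
    have : ((c : 𝓞 K) * θ) * ((c : 𝓞 K) * θ) = -(((c ^ 2 * m : ℕ) : 𝓞 K)) := by
      push_cast
      linear_combination ((c : 𝓞 K))^2 * hθ2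
    rw [this]
    exact (dvd_neg).mpr (by exact_mod_cast Nat.cast_dvd_cast (α := 𝓞 K) hNc2m)
  have hβ1 : φ β = 1 + x := by rw [hβ, map_add, map_one, hx]
  have hpow : (φ β) ^ p = 1 := by
    rw [hβ1, aux_pow_one_add hx2 p]
    have hzero : (p : 𝓞 K ⧸ I) * x = 0 := by
      rw [hx, ← map_natCast φ p, ← map_mul, hmem]
      refine ⟨(k : 𝓞 K) * θ, ?_⟩
      have : ((p * c : ℕ) : 𝓞 K) = ((k * N : ℕ) : 𝓞 K) := by
        rw [mul_comm p c, hcp]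
      push_cast at this
      push_cast
      linear_combination θ * this
    rw [hzero, add_zero]
  have hne : φ β ≠ 1 := by
    intro h
    rw [hβ1] at h
    have hx0 : x = 0 := by
      have := congrArg (fun z => z - 1) h
      simpa using this
    rw [hx, hmem] at hx0
    obtain ⟨γ, hγ⟩ := hx0
    -- from cθ = Nγ deduce kθ = pγ
    have hNne : (N : 𝓞 K) ≠ 0 := Nat.cast_ne_zero.mpr (by omega)
    have hkθ : (k : 𝓞 K) * θ = (p : 𝓞 K) * γ := by
      apply mul_left_cancel₀ hNne
      have h1 : ((c : 𝓞 K) * θ) * (p : 𝓞 K) = ((N : 𝓞 K) * γ) * (p : 𝓞 K) := by rw [hγ]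
      have h2 : ((c * p : ℕ) : 𝓞 K) = ((k * N : ℕ) : 𝓞 K) := by rw [hcp]
      push_cast at h2
      linear_combination h1 - θ * h2
    -- p divides θ
    have hcop : IsCoprime (p : ℤ) (k : ℤ) := by
      rw [Int.isCoprime_iff_gcd_eq_one]
      exact_mod_cast (hp.coprime_iff_not_dvd.mpr hpk)
    obtain ⟨a, b, hab⟩ := hcop
    have hdvdθ : (p : 𝓞 K) ∣ θ := by
      refine ⟨(a : 𝓞 K) * θ + (b : 𝓞 K) * γ, ?_⟩
      have habK : (a : 𝓞 K) * (p : 𝓞 K) + (b : 𝓞 K) * (k : 𝓞 K) = 1 := by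
        exact_mod_cast congrArg (fun z : ℤ => (z : 𝓞 K)) hab
      linear_combination (-θ) * habK + (b : 𝓞 K) * hkθ
    obtain ⟨δ, hδ⟩ := hdvdθ
    -- norm argument
    have hrank : finrank ℤ (𝓞 K) = 2 := by rw [RingOfIntegers.rank, h2]
    have hnormcast : ∀ z : ℤ, Algebra.norm ℤ ((z : ℤ) • (1 : 𝓞 K)) = z ^ 2 := by
      intro z
      have : (z : ℤ) • (1 : 𝓞 K) = algebraMap ℤ (𝓞 K) z := by
        rw [Algebra.smul_def, mul_one]
      rw [this]
      let b0 := Module.Free.chooseBasis ℤ (𝓞 K)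
      rw [Algebra.norm_algebraMap_of_basis b0]
      congr 1
      rw [← finrank_eq_card_chooseBasisIndex, hrank]
    have hnm : Algebra.norm ℤ θ ^ 2 = (m : ℤ) ^ 2 := by
      have h1 : θ ^ 2 = ((-m : ℤ)) • (1 : 𝓞 K) := by
        rw [hθ2]
        push_cast
        rw [Algebra.smul_def, mul_one]
        push_cast
        ring
      calc Algebra.norm ℤ θ ^ 2 = Algebra.norm ℤ (θ ^ 2) := by rw [map_pow]
        _ = (-m : ℤ) ^ 2 := by rw [h1, hnormcast]
        _ = (m : ℤ) ^ 2 := by ring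
    have hpn : (p : ℤ) ^ 2 ∣ Algebra.norm ℤ θ := by
      refine ⟨Algebra.norm ℤ δ, ?_⟩
      have hpcast : ((p : ℕ) : 𝓞 K) = ((p : ℤ)) • (1 : 𝓞 K) := by
        rw [Algebra.smul_def, mul_one]
        push_cast
        rfl
      rw [hδ, map_mul, hpcast, hnormcast]
    -- contradiction with squarefreeness
    have habs : (Algebra.norm ℤ θ).natAbs = m := by
      have h1 : (Algebra.norm ℤ θ).natAbs ^ 2 = m ^ 2 := by
        have := congrArg Int.natAbs hnm
        rwa [Int.natAbs_pow, Int.natAbs_pow, Int.natAbs_natCast] at this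
      exact Nat.pow_left_injective (by norm_num) h1
    have hpm : p * p ∣ m := by
      have h1 : ((p * p : ℕ) : ℤ) ∣ Algebra.norm ℤ θ := by
        push_cast
        rwa [← sq]
      have h2 := Int.natAbs_dvd_natAbs.mpr h1
      rwa [Int.natAbs_natCast, habs] at h2
    exact hp.one_lt.ne' (Nat.isUnit_iff.mp (hsq p hpm))
  exact orderOf_eq_prime hpow hne



/-- Let `K = ℚ(√-m)` be imaginary quadratic, `N ≥ 2`, `p` an odd prime with `p ∣ N` and
`p² ∣ N·d_K`, and `β = 1 + (2N/p)√-m` if `p = 3`, `β = 1 + (6N/p)√-m` if `p ≠ 3`.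
Then `β` has multiplicative order exactly `p` in `𝓞 K ⧸ N 𝓞 K`. -/
theorem stmt_13 (m : ℕ) (hm : 0 < m) (hsq : Squarefree m)
    (K : Type*) [Field K] [NumberField K] (h2 : Module.finrank ℚ K = 2)
    (θ : 𝓞 K) (hθ : (θ : K) ^ 2 = -(m : K))
    (N : ℕ) (hN : 2 ≤ N) (p : ℕ) (hp : p.Prime) (hodd : Odd p) (hpN : p ∣ N)
    (hdisc : (p : ℤ) ^ 2 ∣ (N : ℤ) * NumberField.discr K)
    (β : 𝓞 K) (hβ : β = 1 + (((if p = 3 then 2 * N / p else 6 * N / p) : ℕ) : 𝓞 K) * θ) :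
    orderOf (Ideal.Quotient.mk (Ideal.span {(N : 𝓞 K)}) β) = p := by
  have hθ2 : θ ^ 2 = -(m : 𝓞 K) := by
    apply IsFractionRing.injective (𝓞 K) K
    rw [map_pow, map_neg, map_natCast]
    exact hθ
  have hdd : NumberField.discr K ∣ 4 * (m : ℤ) := aux_discr_dvd m hm K h2 θ hθ2
  have hdvd4 : (p : ℤ) ^ 2 ∣ 4 * N * m := by
    have h1 : (p : ℤ) ^ 2 ∣ (N : ℤ) * (4 * m) := hdisc.trans (mul_dvd_mul_left _ hdd)
    have h2' : (N : ℤ) * (4 * m) = 4 * N * m := by ring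
    rwa [h2'] at h1
  have hpne2 : p ≠ 2 := by
    intro h
    rw [h] at hodd
    exact (Nat.not_odd_iff_even.mpr (by decide)) hodd
  by_cases hp3 : p = 3
  · rw [if_pos hp3] at hβ
    have hpk : ¬ p ∣ 2 := by
      intro h
      exact hpne2 ((Nat.prime_dvd_prime_iff_eq hp Nat.prime_two).mp h)
    exact aux_main m hm hsq K h2 θ hθ2 N hN p hp hpN 2 (Or.inl rfl) hpk hdvd4 β hβ
  · rw [if_neg hp3] at hβ
    have hpk : ¬ p ∣ 6 := by
      intro h
      have h6 : (6 : ℕ) = 2 * 3 := by norm_num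
      rw [h6] at h
      rcases (Nat.Prime.dvd_mul hp).mp h with h' | h'
      · exact hpne2 ((Nat.prime_dvd_prime_iff_eq hp Nat.prime_two).mp h')
      · exact hp3 ((Nat.prime_dvd_prime_iff_eq hp Nat.prime_three).mp h')
    exact aux_main m hm hsq K h2 θ hθ2 N hN p hp hpN 6 (Or.inr rfl) hpk hdvd4 β hβ
end
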